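/- Let T ≥ 4 with 4 dividing T, and set m = T/4. For x ∈ [0,1]^T and t ∈ {1,…,T} define Y_t(x) = min{x_t, v_m(x)} and ζ_t(x) = max{x_t, w_m(x)}, and for q > 0 define the smooth selector x̂_q(t) = [e^{q(ζ_t(x) − w_m(x))²} · ζ_t(x) + e^{q(Y_t(x) − v_m(x))²} · Y_t(x)] / [e^{q(ζ_t(x) − w_m(x))²} + e^{q(Y_t(x) − v_m(x))²}]. Then x̂_q(t) → x_t uniformly: for every ε > 0 there exists q₀ > 0 such that for all q ≥ q₀, all x ∈ [0,1]^T, and all t ∈ {1,…,T}, |x̂_q(t) − x_t| ≤ ε. -/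

import Mathlib

/-- The list of values of `a : Fin T → ℝ` sorted in ascending order. -/
noncomputable def ascList {T : ℕ} (a : Fin T → ℝ) : List ℝ :=
  Multiset.sort (Finset.univ.val.map a) (· ≤ ·)

/-- The `m`-th largest value of `a : Fin T → ℝ` (counted with multiplicity), for `1 ≤ m ≤ T`. -/
noncomputable def kthLargest {T : ℕ} (a : Fin T → ℝ) (m : ℕ) : ℝ :=
  (ascList a).getD (T - m) 0

/-- The `m`-th smallest value of `a : Fin T → ℝ` (counted with multiplicity), for `1 ≤ m ≤ T`. -/
noncomputable def kthSmallest {T : ℕ} (a : Fin T → ℝ) (m : ℕ) : ℝ :=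
  (ascList a).getD (m - 1) 0

/-- `Y_t(x) = min (x t) (v_m x)` where `v_m` is the `m`-th largest value. -/
noncomputable def selY {T : ℕ} (m : ℕ) (x : Fin T → ℝ) (t : Fin T) : ℝ :=
  min (x t) (kthLargest x m)

/-- `ζ_t(x) = max (x t) (w_m x)` where `w_m` is the `m`-th smallest value. -/
noncomputable def selZ {T : ℕ} (m : ℕ) (x : Fin T → ℝ) (t : Fin T) : ℝ :=
  max (x t) (kthSmallest x m)

/-- The smooth selector `x̂_q(t)`. -/
noncomputable def smoothSelector {T : ℕ} (m : ℕ) (q : ℝ) (x : Fin T → ℝ) (t : Fin T) : ℝ :=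
  (Real.exp (q * (selZ m x t - kthSmallest x m) ^ 2) * selZ m x t
      + Real.exp (q * (selY m x t - kthLargest x m) ^ 2) * selY m x t)
    / (Real.exp (q * (selZ m x t - kthSmallest x m) ^ 2)
      + Real.exp (q * (selY m x t - kthLargest x m) ^ 2))

lemma ascList_length {T : ℕ} (a : Fin T → ℝ) : (ascList a).length = T := by
  simp [ascList]

lemma ascList_sorted {T : ℕ} (a : Fin T → ℝ) : (ascList a).Pairwise (· ≤ ·) :=
  Multiset.pairwise_sort _ _

lemma ascList_mem {T : ℕ} (a : Fin T → ℝ) {y : ℝ} (hy : y ∈ ascList a) : ∃ t, a t = y := by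
  have h : y ∈ (Finset.univ.val.map a) := by
    rwa [ascList, Multiset.mem_sort] at hy
  rw [Multiset.mem_map] at h
  obtain ⟨t, _, ht⟩ := h
  exact ⟨t, ht⟩

lemma ascList_getD_mem {T : ℕ} (a : Fin T → ℝ) {i : ℕ} (hi : i < T) :
    ∃ t, a t = (ascList a).getD i 0 := by
  apply ascList_mem
  have hi' : i < (ascList a).length := by rw [ascList_length]; exact hi
  rw [List.getD_eq_getElem _ _ hi']
  exact List.getElem_mem _

lemma kthSmallest_le_kthLargest {T : ℕ} (a : Fin T → ℝ) (m : ℕ) (hm : 1 ≤ m)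
    (hmT : 2 * m ≤ T) : kthSmallest a m ≤ kthLargest a m := by
  have h1 : m - 1 < (ascList a).length := by
    rw [ascList_length]; omega
  have h2 : T - m < (ascList a).length := by
    rw [ascList_length]; omega
  rw [kthSmallest, kthLargest, List.getD_eq_getElem _ _ h1, List.getD_eq_getElem _ _ h2]
  have := (ascList_sorted a).rel_get_of_le (a := ⟨m - 1, h1⟩) (b := ⟨T - m, h2⟩)
    (by simp only [Fin.mk_le_mk]; omega)
  simpa [List.get_eq_getElem] using this

lemma kthLargest_mem {T : ℕ} (a : Fin T → ℝ) (m : ℕ) (hm : 1 ≤ m) (hmT : m ≤ T) :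
    ∃ t, a t = kthLargest a m :=
  ascList_getD_mem a (by omega)

lemma kthSmallest_mem {T : ℕ} (a : Fin T → ℝ) (m : ℕ) (hm : 1 ≤ m) (hmT : m ≤ T) :
    ∃ t, a t = kthSmallest a m :=
  ascList_getD_mem a (by omega)

lemma aux_bound (ε : ℝ) (hε : 0 < ε) (q : ℝ)
    (hq : max 1 (Real.log (1/ε) / ε ^ 2) ≤ q) (d c : ℝ) (hd0 : 0 ≤ d) (hd1 : d ≤ 1)
    (hc : d ^ 2 ≤ c) : d / (Real.exp (q * c) + 1) ≤ ε := by
  have hq1 : (1 : ℝ) ≤ q := le_trans (le_max_left _ _) hq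
  have hden : (0:ℝ) < Real.exp (q * c) + 1 := by positivity
  rcases le_or_gt d ε with h | h
  · calc d / (Real.exp (q * c) + 1) ≤ d / 1 := by
          apply div_le_div_of_nonneg_left hd0 one_pos
          linarith [Real.exp_pos (q * c)]
      _ = d := div_one d
      _ ≤ ε := h
  · have hε1 : ε < 1 := lt_of_lt_of_le h hd1
    have hlog : Real.log (1/ε) ≤ q * ε ^ 2 := by
      have h2 := le_trans (le_max_right 1 (Real.log (1/ε) / ε ^ 2)) hq
      have : Real.log (1/ε) / ε ^ 2 * ε ^ 2 ≤ q * ε ^ 2 := by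
        apply mul_le_mul_of_nonneg_right h2 (by positivity)
      rwa [div_mul_cancel₀ _ (by positivity : (ε:ℝ) ^ 2 ≠ 0)] at this
    have hqc : q * ε ^ 2 ≤ q * c := by
      have hεc : ε ^ 2 ≤ c := by nlinarith [mul_le_mul h.le h.le hε.le hd0]
      exact mul_le_mul_of_nonneg_left hεc (by linarith)
    have hexp : 1 / ε ≤ Real.exp (q * c) := by
      calc 1 / ε = Real.exp (Real.log (1 / ε)) := (Real.exp_log (by positivity)).symm
        _ ≤ Real.exp (q * c) := Real.exp_le_exp.mpr (le_trans hlog hqc)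
    calc d / (Real.exp (q * c) + 1) ≤ 1 / (1 / ε) := by
          apply div_le_div₀ zero_le_one hd1 (by positivity)
          linarith
      _ = ε := one_div_one_div ε

/-- with `m = T/4`, the smooth selector `x̂_q(t)` converges to `x t`
uniformly over `x ∈ [0,1]^T` and `t` as `q → ∞`. -/
theorem smoothSelector_uniform_convergence (T : ℕ) (hT : 4 ≤ T) (hdvd : 4 ∣ T) :
    ∀ ε : ℝ, 0 < ε → ∃ q₀ : ℝ, 0 < q₀ ∧ ∀ q : ℝ, q₀ ≤ q →
      ∀ x : Fin T → ℝ, (∀ t, x t ∈ Set.Icc (0 : ℝ) 1) →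
        ∀ t : Fin T, |smoothSelector (T / 4) q x t - x t| ≤ ε := by
  intro ε hε
  refine ⟨max 1 (Real.log (1/ε) / ε ^ 2), lt_of_lt_of_le one_pos (le_max_left _ _), ?_⟩
  intro q hq x hx t
  set m := T / 4 with hm
  have hm1 : 1 ≤ m := by omega
  have hm2 : 2 * m ≤ T := by omega
  have hmT : m ≤ T := by omega
  set v := kthLargest x m with hv
  set w := kthSmallest x m with hw
  have hwv : w ≤ v := kthSmallest_le_kthLargest x m hm1 hm2
  obtain ⟨tv, htv⟩ := kthLargest_mem x m hm1 hmT
  obtain ⟨tw, htw⟩ := kthSmallest_mem x m hm1 hmT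
  have hv0 : (0:ℝ) ≤ v := by rw [hv, ← htv]; exact (hx tv).1
  have hw1 : w ≤ 1 := by rw [hw, ← htw]; exact (hx tw).2
  have hxt0 := (hx t).1
  have hxt1 := (hx t).2
  rcases lt_or_ge v (x t) with hc1 | hc1
  · -- x t > v : selZ = x t, selY = v
    have hZ : selZ m x t = x t := max_eq_left (by linarith)
    have hY : selY m x t = v := min_eq_right hc1.le
    rw [smoothSelector, hZ, hY, ← hv, ← hw]
    have h0 : (v - v) ^ 2 = 0 := by ring
    rw [h0, mul_zero, Real.exp_zero]
    set A := Real.exp (q * (x t - w) ^ 2) with hA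
    have hApos : 0 < A := Real.exp_pos _
    have key : (A * x t + 1 * v) / (A + 1) - x t = (v - x t) / (A + 1) := by
      field_simp
      ring
    rw [key, abs_div, abs_of_pos (by linarith : (0:ℝ) < A + 1),
      abs_of_neg (by linarith : v - x t < 0), neg_sub]
    exact aux_bound ε hε q hq (x t - v) ((x t - w) ^ 2) (by linarith) (by linarith)
      (by nlinarith)
  · rcases lt_or_ge (x t) w with hc2 | hc2
    · -- x t < w : selZ = w, selY = x t
      have hZ : selZ m x t = w := max_eq_right hc2.le
      have hY : selY m x t = x t := min_eq_left (by linarith)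
      rw [smoothSelector, hZ, hY, ← hv, ← hw]
      have h0 : (w - w) ^ 2 = 0 := by ring
      rw [h0, mul_zero, Real.exp_zero]
      set B := Real.exp (q * (x t - v) ^ 2) with hB
      have hBpos : 0 < B := Real.exp_pos _
      have key : (1 * w + B * x t) / (1 + B) - x t = (w - x t) / (B + 1) := by
        field_simp
        ring
      rw [key, abs_div, abs_of_pos (by linarith : (0:ℝ) < B + 1),
        abs_of_pos (by linarith : (0:ℝ) < w - x t)]
      exact aux_bound ε hε q hq (w - x t) ((x t - v) ^ 2) (by linarith) (by linarith)
        (by nlinarith)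
    · -- w ≤ x t ≤ v : selZ = selY = x t, selector equals x t
      have hZ : selZ m x t = x t := max_eq_left hc2
      have hY : selY m x t = x t := min_eq_left hc1
      rw [smoothSelector, hZ, hY, ← hv, ← hw]
      set A := Real.exp (q * (x t - w) ^ 2) with hA
      set B := Real.exp (q * (x t - v) ^ 2) with hB
      have hApos : 0 < A := Real.exp_pos _
      have hBpos : 0 < B := Real.exp_pos _
      have key : (A * x t + B * x t) / (A + B) - x t = 0 := by
        field_simp
        ring
      rw [key, abs_zero]
      exact hε.le
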